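/- Let n be a positive integer and N be a set of n points in the open unit square (0,1)². Then the set S = (0,1)² \ N satisfies b₂(S) ≥ 1/(2n), where b₂(S) is the probability that the convex hull of three points chosen uniformly independently at random from S is contained in S. -/

import Mathlib

open MeasureTheory
open scoped ENNReal

namespace UnitSq

abbrev P := ℝ × ℝ

def Q : Set P := Set.Ioo (0:ℝ) 1 ×ˢ Set.Ioo (0:ℝ) 1

def cr (v w : P) : ℝ := v.1 * w.2 - v.2 * w.1

lemma cr_zero_left (w : P) : cr 0 w = 0 := by simp [cr]

lemma cr_zero_right (v : P) : cr v 0 = 0 := by simp [cr]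

lemma cr_self (v : P) : cr v v = 0 := by simp [cr]; ring

lemma cr_smul (v : P) (c : ℝ) (w : P) : cr v (c • w) = c * cr v w := by
  simp [cr, Prod.smul_fst, Prod.smul_snd, smul_eq_mul]; ring

lemma cr_add (v a b : P) : cr v (a + b) = cr v a + cr v b := by
  simp [cr, Prod.fst_add, Prod.snd_add]; ring

lemma cr_neg (v w : P) : cr v (-w) = - cr v w := by
  simp [cr]; ring

def crL (v : P) : P →ₗ[ℝ] ℝ where
  toFun w := cr v w
  map_add' a b := cr_add v a b
  map_smul' c w := by simpa using cr_smul v c w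

@[simp] lemma crL_apply (v w : P) : crL v w = cr v w := rfl

lemma exists_smul_of_cr_eq_zero {v w : P} (hv : v ≠ 0) (h : cr v w = 0) :
    ∃ c : ℝ, w = c • v := by
  by_cases h1 : v.1 = 0
  · have h2 : v.2 ≠ 0 := by
      intro h2; exact hv (Prod.ext h1 h2)
    have hw1 : w.1 = 0 := by
      have : v.1 * w.2 - v.2 * w.1 = 0 := h
      rw [h1] at this
      field_simp at this
      rcases mul_eq_zero.mp (by linarith : v.2 * w.1 = 0) with h|h
      · exact absurd h h2
      · exact h
    refine ⟨w.2 / v.2, ?_⟩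
    apply Prod.ext <;> simp [Prod.smul_fst, Prod.smul_snd, smul_eq_mul, h1, hw1]
    field_simp
  · refine ⟨w.1 / v.1, ?_⟩
    have : v.1 * w.2 = v.2 * w.1 := by linarith [h, sub_eq_zero.mp h]
    apply Prod.ext <;> simp [Prod.smul_fst, Prod.smul_snd, smul_eq_mul]
    · field_simp
    · field_simp
      linarith [this]

lemma two_mul_le_sq_add_sq (a b : ℝ≥0∞) : 2 * (a * b) ≤ a ^ 2 + b ^ 2 := by
  have key : ∀ x y : ℝ≥0∞, x ≤ y → 2 * (x * y) ≤ x ^ 2 + y ^ 2 := by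
    intro x y h
    obtain ⟨c, rfl⟩ := exists_add_of_le h
    calc 2 * (x * (x + c)) = 2*x^2 + 2*(x*c) := by ring
    _ ≤ (2*x^2 + 2*(x*c)) + c^2 := le_self_add
    _ = x^2 + (x+c)^2 := by ring
  rcases le_total a b with h | h
  · exact key a b h
  · rw [mul_comm a b, add_comm]
    exact key b a h

lemma enn_cs {ι : Type*} (s : Finset ι) (f : ι → ℝ≥0∞) :
    (∑ i ∈ s, f i) ^ 2 ≤ s.card * ∑ i ∈ s, (f i) ^ 2 := by
  have h2 : 2 * (∑ i ∈ s, f i) ^ 2 ≤ 2 * (s.card * ∑ i ∈ s, (f i) ^ 2) := by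
    calc 2 * (∑ i ∈ s, f i) ^ 2 = ∑ i ∈ s, ∑ j ∈ s, 2 * (f i * f j) := by
          rw [sq, Finset.sum_mul_sum]
          rw [Finset.mul_sum]
          exact Finset.sum_congr rfl fun i _ => by rw [Finset.mul_sum]
    _ ≤ ∑ i ∈ s, ∑ j ∈ s, ((f i)^2 + (f j)^2) := by
          gcongr with i hi j hj
          exact two_mul_le_sq_add_sq _ _
    _ = 2 * (s.card * ∑ i ∈ s, (f i) ^ 2) := by
          simp [Finset.sum_add_distrib, Finset.sum_const, Finset.mul_sum, nsmul_eq_mul]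
          rw [show ∀ x : ℝ≥0∞, x + x = 2 * x from fun x => (two_mul x).symm, Finset.mul_sum]
  exact (ENNReal.mul_le_mul_iff_right (by norm_num) (by norm_num)).mp h2

open Classical in
noncomputable def pat (s : Finset P) (v : P → P) (u : P) : Finset P :=
  s.filter fun p => 0 < cr (v p) u

open Classical in
noncomputable def Rz (s : Finset P) (v : P → P) : Finset (Finset P) :=
  s.powerset.filter fun F =>
    ∃ u : P, ∀ p ∈ s, if p ∈ F then 0 < cr (v p) u else cr (v p) u < 0

lemma mem_Rz {s : Finset P} {v : P → P} {F : Finset P} :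
    F ∈ Rz s v ↔ F ⊆ s ∧
      ∃ u : P, ∀ p ∈ s, if p ∈ F then 0 < cr (v p) u else cr (v p) u < 0 := by
  classical
  simp [Rz, Finset.mem_filter, Finset.mem_powerset]

lemma if_transfer {F F' : Finset P} {p : P} (hiff : (p ∈ F') ↔ (p ∈ F)) {x : ℝ}
    (h : if p ∈ F then 0 < x else x < 0) :
    if p ∈ F' then 0 < x else x < 0 := by
  classical
  by_cases hpF : p ∈ F
  · rw [if_pos hpF] at h; rw [if_pos (hiff.mpr hpF)]; exact h
  · rw [if_neg hpF] at h; rw [if_neg (fun hh => hpF (hiff.mp hh))]; exact h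

lemma card_Rz_le (v : P → P) (s : Finset P) (hs : s.Nonempty)
    (hv : ∀ p ∈ s, v p ≠ 0) : (Rz s v).card ≤ 2 * s.card := by
  classical
  induction s using Finset.induction_on with
  | empty => exact absurd hs (by simp)
  | @insert a s ha ih =>
    by_cases hse : s = ∅
    · subst hse
      have h1 : Rz {a} v ⊆ ({a} : Finset P).powerset := Finset.filter_subset _ _
      calc (Rz {a} v).card ≤ ({a} : Finset P).powerset.card := Finset.card_le_card h1
      _ = 2 := by simp
      _ ≤ 2 * (insert a (∅:Finset P)).card := by simp
    · have hsne : s.Nonempty := Finset.nonempty_of_ne_empty hse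
      have hv' : ∀ p ∈ s, v p ≠ 0 := fun p hp => hv p (Finset.mem_insert_of_mem hp)
      have hva : v a ≠ 0 := hv a (Finset.mem_insert_self a s)
      set A : Finset (Finset P) := (Rz (insert a s) v).filter (fun F => a ∉ F) with hA
      set B : Finset (Finset P) := (Rz (insert a s) v).filter (fun F => a ∈ F) with hB
      set eB : Finset (Finset P) := B.image (fun F => F.erase a) with heB
      have hAsub : A ⊆ Rz s v := by
        intro F hF
        rw [hA, Finset.mem_filter] at hF
        obtain ⟨hF1, hFa⟩ := hF
        rw [mem_Rz] at hF1 ⊢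
        obtain ⟨hFsub, u, hu⟩ := hF1
        refine ⟨fun p hp => ?_, u, fun p hp => hu p (Finset.mem_insert_of_mem hp)⟩
        rcases Finset.mem_insert.mp (hFsub hp) with h | h
        · exact absurd (h ▸ hp) hFa
        · exact h
      have heBsub : eB ⊆ Rz s v := by
        intro F' hF'
        rw [heB, Finset.mem_image] at hF'
        obtain ⟨F, hFB, rfl⟩ := hF'
        rw [hB, Finset.mem_filter] at hFB
        obtain ⟨hF1, hFa⟩ := hFB
        rw [mem_Rz] at hF1 ⊢
        obtain ⟨hFsub, u, hu⟩ := hF1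
        constructor
        · intro p hp
          have hpF := Finset.mem_of_mem_erase hp
          have hpa := Finset.ne_of_mem_erase hp
          rcases Finset.mem_insert.mp (hFsub hpF) with h | h
          · exact absurd h hpa
          · exact h
        · refine ⟨u, fun p hp => ?_⟩
          have hpa : p ≠ a := fun h => ha (h ▸ hp)
          exact if_transfer (by simp [Finset.mem_erase, hpa])
            (hu p (Finset.mem_insert_of_mem hp))
      have hcardeB : eB.card = B.card := by
        rw [heB]
        apply Finset.card_image_of_injOn
        intro F1 h1 F2 h2 h12
        rw [Finset.mem_coe, hB, Finset.mem_filter] at h1 h2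
        have e1 : F1 = insert a (F1.erase a) := (Finset.insert_erase h1.2).symm
        have e2 : F2 = insert a (F2.erase a) := (Finset.insert_erase h2.2).symm
        dsimp only at h12
        rw [e1, e2, h12]
      have hkey : A ∩ eB ⊆ {pat s v (v a), pat s v (-(v a))} := by
        intro F' hF'
        rw [Finset.mem_inter] at hF'
        obtain ⟨hFA, hFeB⟩ := hF'
        have hFA' := hFA
        rw [hA, Finset.mem_filter] at hFA'
        obtain ⟨hF1, hFa⟩ := hFA'
        rw [mem_Rz] at hF1
        obtain ⟨hFsub, u1, hu1⟩ := hF1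
        have hbb : cr (v a) u1 < 0 := by
          have := hu1 a (Finset.mem_insert_self a s)
          rwa [if_neg hFa] at this
        have hu1' : ∀ p ∈ s, if p ∈ F' then 0 < cr (v p) u1 else cr (v p) u1 < 0 :=
          fun p hp => hu1 p (Finset.mem_insert_of_mem hp)
        have hF'sub : F' ⊆ s := by
          intro p hp
          rcases Finset.mem_insert.mp (hFsub hp) with h | h
          · exact absurd (h ▸ hp) hFa
          · exact h
        rw [heB, Finset.mem_image] at hFeB
        obtain ⟨F, hFB, hFe⟩ := hFeB
        rw [hB, Finset.mem_filter] at hFB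
        obtain ⟨hF2, hFa2⟩ := hFB
        rw [mem_Rz] at hF2
        obtain ⟨hFsub2, u2, hu2⟩ := hF2
        have haa : 0 < cr (v a) u2 := by
          have := hu2 a (Finset.mem_insert_self a s)
          rwa [if_pos hFa2] at this
        have hu2' : ∀ p ∈ s, if p ∈ F' then 0 < cr (v p) u2 else cr (v p) u2 < 0 := by
          intro p hp
          have hpa : p ≠ a := fun h => ha (h ▸ hp)
          refine if_transfer ?_ (hu2 p (Finset.mem_insert_of_mem hp))
          rw [← hFe]
          simp [Finset.mem_erase, hpa]
        set aa := cr (v a) u2 with haa'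
        set bb := cr (v a) u1 with hbb'
        set t : ℝ := aa / (aa - bb) with ht'
        have hab : 0 < aa - bb := by linarith
        have ht0 : 0 < t := div_pos haa hab
        have ht1 : t < 1 := (div_lt_one hab).mpr (by linarith)
        set u0 : P := (1 - t) • u2 + t • u1 with hu0'
        have hcru0 : ∀ w : P, cr w u0 = (1-t) * cr w u2 + t * cr w u1 := by
          intro w; rw [hu0', cr_add, cr_smul, cr_smul]
        have hker : cr (v a) u0 = 0 := by
          rw [hcru0, ← haa', ← hbb', ht']
          field_simp
          ring
        have hsign : ∀ p ∈ s, if p ∈ F' then 0 < cr (v p) u0 else cr (v p) u0 < 0 := by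
          intro p hp
          have h1 := hu1' p hp
          have h2 := hu2' p hp
          by_cases hpF : p ∈ F'
          · rw [if_pos hpF] at h1 h2 ⊢
            rw [hcru0]
            have e1 : 0 < (1-t) * cr (v p) u2 := mul_pos (by linarith) h2
            have e2 : 0 < t * cr (v p) u1 := mul_pos ht0 h1
            linarith
          · rw [if_neg hpF] at h1 h2 ⊢
            rw [hcru0]
            have e1 : (1-t) * cr (v p) u2 < 0 := mul_neg_of_pos_of_neg (by linarith) h2
            have e2 : t * cr (v p) u1 < 0 := mul_neg_of_pos_of_neg ht0 h1
            linarith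
        have hu0ne : u0 ≠ 0 := by
          obtain ⟨p0, hp0⟩ := hsne
          intro h0
          have := hsign p0 hp0
          rw [h0, cr_zero_right] at this
          by_cases hpF : p0 ∈ F'
          · rw [if_pos hpF] at this; exact lt_irrefl 0 this
          · rw [if_neg hpF] at this; exact lt_irrefl 0 this
        obtain ⟨c, hc⟩ := exists_smul_of_cr_eq_zero hva hker
        have hcne : c ≠ 0 := by
          intro h0; rw [h0, zero_smul] at hc; exact hu0ne hc
        have hmem : ∀ p ∈ s, (p ∈ F' ↔ 0 < c * cr (v p) (v a)) := by
          intro p hp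
          have hthis := hsign p hp
          have hcr : cr (v p) u0 = c * cr (v p) (v a) := by rw [hc, cr_smul]
          by_cases hpF : p ∈ F'
          · rw [if_pos hpF, hcr] at hthis; simp [hpF, hthis]
          · rw [if_neg hpF, hcr] at hthis
            simp only [hpF, false_iff, not_lt]
            linarith
        rcases lt_or_gt_of_ne hcne with hcneg | hcpos
        · have hEq : F' = pat s v (-(v a)) := by
            apply Finset.ext
            intro p
            classical
            rw [pat, Finset.mem_filter, cr_neg]
            constructor
            · intro hp
              have hps : p ∈ s := hF'sub hp
              have := (hmem p hps).mp hp
              refine ⟨hps, ?_⟩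
              nlinarith
            · rintro ⟨hps, hneg⟩
              apply (hmem p hps).mpr
              nlinarith
          rw [hEq]
          exact Finset.mem_insert.mpr (Or.inr (Finset.mem_singleton_self _))
        · have hEq : F' = pat s v (v a) := by
            apply Finset.ext
            intro p
            classical
            rw [pat, Finset.mem_filter]
            constructor
            · intro hp
              have hps : p ∈ s := hF'sub hp
              have := (hmem p hps).mp hp
              refine ⟨hps, ?_⟩
              nlinarith
            · rintro ⟨hps, hpos⟩
              exact (hmem p hps).mpr (by nlinarith)
          rw [hEq]
          exact Finset.mem_insert_self _ _
      have hcardkey : (A ∩ eB).card ≤ 2 := by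
        refine le_trans (Finset.card_le_card hkey) ?_
        refine le_trans (Finset.card_insert_le _ _) ?_
        simp
      have hAB : B.card + A.card = (Rz (insert a s) v).card := by
        rw [hA, hB]
        exact Finset.card_filter_add_card_filter_not (p := fun F => a ∈ F)
      have hunion : (A ∪ eB) ⊆ Rz s v := Finset.union_subset hAsub heBsub
      calc (Rz (insert a s) v).card = B.card + A.card := hAB.symm
      _ = A.card + eB.card := by rw [hcardeB]; ring
      _ = (A ∪ eB).card + (A ∩ eB).card := (Finset.card_union_add_card_inter A eB).symm
      _ ≤ (Rz s v).card + 2 := add_le_add (Finset.card_le_card hunion) hcardkey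
      _ ≤ 2 * s.card + 2 := add_le_add_left (ih hsne hv') 2
      _ = 2 * (insert a s).card := by rw [Finset.card_insert_of_notMem ha]; ring

lemma measurableQ : MeasurableSet Q :=
  (measurableSet_Ioo).prod (measurableSet_Ioo)

lemma volQ : volume Q = 1 := by
  rw [Q, Measure.volume_eq_prod _ _, Measure.prod_prod, Real.volume_Ioo]
  norm_num

lemma measurable_crz (v z : P) : Measurable fun w : P => cr v (w - z) := by
  unfold cr
  fun_prop

lemma line_null {v : P} (z : P) (hv : v ≠ 0) :
    volume {w : P | cr v (w - z) = 0} = 0 := by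
  by_cases h1 : v.1 = 0
  · have h2 : v.2 ≠ 0 := fun h2 => hv (Prod.ext h1 h2)
    have hset : {w : P | cr v (w - z) = 0} = {z.1} ×ˢ (Set.univ : Set ℝ) := by
      ext w
      simp only [Set.mem_setOf_eq, Set.mem_prod, Set.mem_singleton_iff, Set.mem_univ, and_true,
        cr, h1, Prod.fst_sub, Prod.snd_sub]
      constructor
      · intro h
        have : v.2 * (w.1 - z.1) = 0 := by linarith
        rcases mul_eq_zero.mp this with h' | h'
        · exact absurd h' h2
        · linarith
      · intro h; rw [h]; ring_nf
    rw [hset, Measure.volume_eq_prod _ _, Measure.prod_prod]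
    simp
  · have hmeas : MeasurableSet {w : P | cr v (w - z) = 0} :=
      measurableSet_eq_fun (measurable_crz v z) measurable_const
    rw [Measure.volume_eq_prod _ _, Measure.prod_apply hmeas]
    have hslice : ∀ x : ℝ, (Prod.mk x ⁻¹' {w : P | cr v (w - z) = 0}) =
        {z.2 + v.2 * (x - z.1) / v.1} := by
      intro x
      ext y
      simp only [Set.mem_preimage, Set.mem_setOf_eq, Set.mem_singleton_iff, cr,
        Prod.fst_sub, Prod.snd_sub]
      constructor
      · intro h
        field_simp
        nlinarith [h]
      · intro h
        rw [h]
        field_simp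
        ring
    simp only [hslice]
    simp

def Cell (N : Finset P) (z : P) (F : Finset P) : Set P :=
  Q ∩ ⋂ p ∈ N, {w | if p ∈ F then 0 < cr (p - z) (w - z) else cr (p - z) (w - z) < 0}

lemma mem_Cell {N : Finset P} {z : P} {F : Finset P} {w : P} :
    w ∈ Cell N z F ↔ w ∈ Q ∧ ∀ p ∈ N,
      if p ∈ F then 0 < cr (p - z) (w - z) else cr (p - z) (w - z) < 0 := by
  simp [Cell, Set.mem_iInter]

lemma measurable_Cell (N : Finset P) (z : P) (F : Finset P) :
    MeasurableSet (Cell N z F) := by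
  apply measurableQ.inter
  apply MeasurableSet.biInter (N.countable_toSet)
  intro p _
  by_cases hp : p ∈ F
  · simp only [hp, if_true]
    exact measurableSet_lt measurable_const (measurable_crz _ _)
  · simp only [hp, if_false]
    exact measurableSet_lt (measurable_crz _ _) measurable_const

lemma Cell_disjoint (N : Finset P) (z : P) :
    Set.PairwiseDisjoint (↑N.powerset : Set (Finset P)) (Cell N z) := by
  intro F hF G hG hFG
  rw [Finset.mem_coe, Finset.mem_powerset] at hF hG
  refine Set.disjoint_left.mpr fun w hwF hwG => ?_
  rw [mem_Cell] at hwF hwG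
  have : ∃ p ∈ N, (p ∈ F ∧ p ∉ G) ∨ (p ∈ G ∧ p ∉ F) := by
    by_contra hcon
    push_neg at hcon
    apply hFG
    apply Finset.ext
    intro p
    constructor
    · intro hp
      exact (hcon p (hF hp)).1 hp
    · intro hp
      exact (hcon p (hG hp)).2 hp
  obtain ⟨p, hpN, hcase⟩ := this
  have h1 := hwF.2 p hpN
  have h2 := hwG.2 p hpN
  rcases hcase with ⟨hpF, hpG⟩ | ⟨hpG, hpF⟩
  · rw [if_pos hpF] at h1; rw [if_neg hpG] at h2; linarith
  · rw [if_neg hpF] at h1; rw [if_pos hpG] at h2; linarith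

lemma Cell_union (N : Finset P) (z : P) :
    (⋃ F ∈ N.powerset, Cell N z F) = Q \ ⋃ p ∈ N, {w | cr (p - z) (w - z) = 0} := by
  classical
  ext w
  simp only [Set.mem_iUnion, Set.mem_diff, Set.mem_setOf_eq, exists_prop]
  constructor
  · rintro ⟨F, hF, hw⟩
    rw [mem_Cell] at hw
    refine ⟨hw.1, fun hcon => ?_⟩
    obtain ⟨p, hpN, hp0⟩ := hcon
    have := hw.2 p hpN
    by_cases hpF : p ∈ F
    · rw [if_pos hpF] at this; rw [hp0] at this; exact lt_irrefl 0 this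
    · rw [if_neg hpF] at this; rw [hp0] at this; exact lt_irrefl 0 this
  · rintro ⟨hwQ, hno⟩
    push_neg at hno
    refine ⟨N.filter (fun p => 0 < cr (p - z) (w - z)), Finset.mem_powerset.mpr (Finset.filter_subset _ _), ?_⟩
    rw [mem_Cell]
    refine ⟨hwQ, fun p hpN => ?_⟩
    by_cases hp : 0 < cr (p - z) (w - z)
    · have hmem : p ∈ N.filter (fun q => 0 < cr (q - z) (w - z)) :=
        Finset.mem_filter.mpr ⟨hpN, hp⟩
      rw [if_pos hmem]; exact hp
    · have hmem : p ∉ N.filter (fun q => 0 < cr (q - z) (w - z)) :=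
        fun hmem => hp (Finset.mem_filter.mp hmem).2
      rw [if_neg hmem]
      exact lt_of_le_of_ne (le_of_not_gt hp) (hno p hpN)

lemma sum_Cell (N : Finset P) (z : P) (hz : ∀ p ∈ N, p ≠ z) :
    ∑ F ∈ N.powerset, volume (Cell N z F) = 1 := by
  rw [← measure_biUnion_finset (Cell_disjoint N z) (fun F _ => measurable_Cell N z F)]
  rw [Cell_union N z]
  rw [measure_diff_null]
  · exact volQ
  · refine measure_biUnion_null_iff (N.countable_toSet) |>.mpr fun p hp => ?_
    exact line_null z (sub_ne_zero.mpr (hz p (by exact_mod_cast hp)))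

lemma slice_lb (N : Finset P) (n : ℕ) (hn : 0 < n) (hcard : N.card = n)
    (z : P) (hz : ∀ p ∈ N, p ≠ z) :
    (1:ℝ≥0∞)/(2*n) ≤ volume {y : P × P | y.1 ∈ Q ∧ y.2 ∈ Q ∧ ∀ p ∈ N,
      (0 < cr (p - z) (y.1 - z) ∧ 0 < cr (p - z) (y.2 - z)) ∨
      (cr (p - z) (y.1 - z) < 0 ∧ cr (p - z) (y.2 - z) < 0)} := by
  classical
  set G := {y : P × P | y.1 ∈ Q ∧ y.2 ∈ Q ∧ ∀ p ∈ N,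
      (0 < cr (p - z) (y.1 - z) ∧ 0 < cr (p - z) (y.2 - z)) ∨
      (cr (p - z) (y.1 - z) < 0 ∧ cr (p - z) (y.2 - z) < 0)} with hG
  have hsub : (⋃ F ∈ N.powerset, Cell N z F ×ˢ Cell N z F) ⊆ G := by
    intro y hy
    simp only [Set.mem_iUnion, exists_prop] at hy
    obtain ⟨F, hF, hy1, hy2⟩ := hy
    rw [mem_Cell] at hy1 hy2
    refine ⟨hy1.1, hy2.1, fun p hp => ?_⟩
    have h1 := hy1.2 p hp
    have h2 := hy2.2 p hp
    by_cases hpF : p ∈ F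
    · rw [if_pos hpF] at h1 h2; exact Or.inl ⟨h1, h2⟩
    · rw [if_neg hpF] at h1 h2; exact Or.inr ⟨h1, h2⟩
  have hdisj : Set.PairwiseDisjoint (↑N.powerset : Set (Finset P))
      (fun F => Cell N z F ×ˢ Cell N z F) := by
    intro F hF G' hG' hFG
    refine Set.disjoint_left.mpr fun y hy1 hy2 => ?_
    exact (Set.disjoint_left.mp (Cell_disjoint N z hF hG' hFG) hy1.1) hy2.1
  have hsq : ∀ F, volume (Cell N z F ×ˢ Cell N z F) = (volume (Cell N z F))^2 :=
    fun F => by rw [Measure.volume_eq_prod _ _, Measure.prod_prod, sq]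
  have hvol : ∑ F ∈ N.powerset, (volume (Cell N z F))^2 ≤ volume G :=
    calc ∑ F ∈ N.powerset, (volume (Cell N z F))^2
        = ∑ F ∈ N.powerset, volume (Cell N z F ×ˢ Cell N z F) :=
          Finset.sum_congr rfl fun F _ => (hsq F).symm
    _ = volume (⋃ F ∈ N.powerset, Cell N z F ×ˢ Cell N z F) :=
          (measure_biUnion_finset hdisj
            (fun F _ => (measurable_Cell N z F).prod (measurable_Cell N z F))).symm
    _ ≤ volume G := measure_mono hsub
  -- support of the cell measures
  set f : Finset P → ℝ≥0∞ := fun F => volume (Cell N z F) with hf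
  set supp : Finset (Finset P) := N.powerset.filter (fun F => f F ≠ 0) with hsupp
  have hsum1 : ∑ F ∈ supp, f F = 1 := by
    rw [hsupp, Finset.sum_filter_ne_zero]
    exact sum_Cell N z hz
  have hNne : N.Nonempty := Finset.card_pos.mp (hcard ▸ hn)
  have hsuppsub : supp ⊆ Rz N (fun p => p - z) := by
    intro F hF
    rw [hsupp, Finset.mem_filter] at hF
    obtain ⟨hFpow, hFne⟩ := hF
    obtain ⟨w, hw⟩ := nonempty_of_measure_ne_zero hFne
    rw [mem_Cell] at hw
    exact mem_Rz.mpr ⟨Finset.mem_powerset.mp hFpow, w - z, hw.2⟩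
  have hcardsupp : (supp.card : ℝ≥0∞) ≤ 2 * n := by
    have h1 : supp.card ≤ 2 * n := by
      calc supp.card ≤ (Rz N (fun p => p - z)).card := Finset.card_le_card hsuppsub
      _ ≤ 2 * N.card := card_Rz_le _ N hNne (fun p hp => sub_ne_zero.mpr (hz p hp))
      _ = 2 * n := by rw [hcard]
    exact_mod_cast h1
  have hchain : (1:ℝ≥0∞) ≤ (2 * n) * volume G := by
    calc (1:ℝ≥0∞) = (∑ F ∈ supp, f F)^2 := by rw [hsum1, one_pow]
    _ ≤ supp.card * ∑ F ∈ supp, (f F)^2 := enn_cs supp f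
    _ ≤ (2 * n) * ∑ F ∈ N.powerset, (f F)^2 := by
        apply mul_le_mul' hcardsupp
        exact Finset.sum_le_sum_of_subset (Finset.filter_subset _ _)
    _ ≤ (2 * n) * volume G := mul_le_mul' le_rfl hvol
  have hchain' : (1:ℝ≥0∞) ≤ volume G * (2*(n:ℝ≥0∞)) := by
    rw [mul_comm]
    convert hchain using 2
  have hres := ENNReal.div_le_of_le_mul hchain'
  exact hres

/-- If the two other vertices have strictly the same orientation w.r.t. every point of `N`
(as seen from `A 0`), then no point of `N` lies in the convex hull. -/

lemma hull_avoid (N : Finset P) (A : Fin 3 → P)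
    (hp : ∀ p ∈ N, (0 < cr (p - A 0) (A 1 - A 0) ∧ 0 < cr (p - A 0) (A 2 - A 0)) ∨
      (cr (p - A 0) (A 1 - A 0) < 0 ∧ cr (p - A 0) (A 2 - A 0) < 0)) :
    ∀ q ∈ N, q ∉ convexHull ℝ (Set.range A) := by
  intro q hq hmem
  classical
  set v : P := q - A 0 with hv
  have hrange : Set.range A ⊆ (↑({A 0, A 1, A 2} : Finset P) : Set P) := by
    rintro _ ⟨i, rfl⟩
    fin_cases i <;> simp
  have hmem' : q ∈ convexHull ℝ (↑({A 0, A 1, A 2} : Finset P) : Set P) :=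
    convexHull_mono hrange hmem
  rw [Finset.convexHull_eq] at hmem'
  obtain ⟨w, hw0, hw1, hwc⟩ := hmem'
  set t : Finset P := {A 0, A 1, A 2} with ht
  rw [Finset.centerMass_eq_of_sum_1 _ _ hw1] at hwc
  simp only [id] at hwc
  -- q - A 0 = ∑ y in t, w y • (y - A 0)
  have hqA : q - A 0 = ∑ y ∈ t, w y • (y - A 0) := by
    have : ∑ y ∈ t, w y • (y - A 0) = (∑ y ∈ t, w y • y) - (∑ y ∈ t, w y) • A 0 := by
      rw [Finset.sum_smul]
      rw [← Finset.sum_sub_distrib]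
      exact Finset.sum_congr rfl fun y _ => smul_sub (w y) y (A 0)
    rw [this, hw1, hwc, one_smul]
  have hcrsum : ∑ y ∈ t, w y * cr v (y - A 0) = 0 := by
    have := congrArg (crL v) hqA
    rw [map_sum] at this
    simp only [LinearMap.map_smul, smul_eq_mul, crL_apply] at this
    rw [← this, hv, cr_self]
  have hymem : ∀ y ∈ t, y = A 0 ∨ y = A 1 ∨ y = A 2 := by
    intro y hy
    simpa [ht, Finset.mem_insert, Finset.mem_singleton] using hy
  have hqA0 : q = A 0 := by
    have hterm : ∀ y ∈ t, w y • y = w y • A 0 := by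
      rcases hp q hq with ⟨h1, h2⟩ | ⟨h1, h2⟩
      · have hnn : ∀ y ∈ t, 0 ≤ w y * cr v (y - A 0) := by
          intro y hy
          rcases hymem y hy with rfl | rfl | rfl
          · rw [sub_self, cr_zero_right, mul_zero]
          · exact mul_nonneg (hw0 _ hy) (le_of_lt h1)
          · exact mul_nonneg (hw0 _ hy) (le_of_lt h2)
        have hz := (Finset.sum_eq_zero_iff_of_nonneg hnn).mp hcrsum
        intro y hy
        rcases hymem y hy with rfl | rfl | rfl
        · rfl
        · have := hz _ hy
          have hwy : w (A 1) = 0 := by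
            rcases mul_eq_zero.mp this with h | h
            · exact h
            · exact absurd h (ne_of_gt h1)
          rw [hwy, zero_smul, zero_smul]
        · have := hz _ hy
          have hwy : w (A 2) = 0 := by
            rcases mul_eq_zero.mp this with h | h
            · exact h
            · exact absurd h (ne_of_gt h2)
          rw [hwy, zero_smul, zero_smul]
      · have hnp : ∀ y ∈ t, w y * cr v (y - A 0) ≤ 0 := by
          intro y hy
          rcases hymem y hy with rfl | rfl | rfl
          · rw [sub_self, cr_zero_right, mul_zero]
          · exact mul_nonpos_of_nonneg_of_nonpos (hw0 _ hy) (le_of_lt h1)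
          · exact mul_nonpos_of_nonneg_of_nonpos (hw0 _ hy) (le_of_lt h2)
        have hz := (Finset.sum_eq_zero_iff_of_nonpos hnp).mp hcrsum
        intro y hy
        rcases hymem y hy with rfl | rfl | rfl
        · rfl
        · have := hz _ hy
          have hwy : w (A 1) = 0 := by
            rcases mul_eq_zero.mp this with h | h
            · exact h
            · exact absurd h (ne_of_lt h1)
          rw [hwy, zero_smul, zero_smul]
        · have := hz _ hy
          have hwy : w (A 2) = 0 := by
            rcases mul_eq_zero.mp this with h | h
            · exact h
            · exact absurd h (ne_of_lt h2)
          rw [hwy, zero_smul, zero_smul]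
    calc q = ∑ y ∈ t, w y • y := hwc.symm
    _ = ∑ y ∈ t, w y • A 0 := Finset.sum_congr rfl hterm
    _ = (∑ y ∈ t, w y) • A 0 := (Finset.sum_smul).symm
    _ = A 0 := by rw [hw1, one_smul]
  -- contradiction : then v = 0 but cr v (A 1 - A 0) ≠ 0
  rcases hp q hq with ⟨h1, _⟩ | ⟨h1, _⟩ <;>
  · rw [hqA0, sub_self, cr_zero_left] at h1
    exact lt_irrefl 0 h1

def E3 (N : Finset P) : Set (P × P × P) :=
  (Q ×ˢ Q ×ˢ Q) ∩ ⋂ p ∈ N,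
    (({x : P × P × P | 0 < cr (p - x.1) (x.2.1 - x.1)} ∩
      {x : P × P × P | 0 < cr (p - x.1) (x.2.2 - x.1)}) ∪
     ({x : P × P × P | cr (p - x.1) (x.2.1 - x.1) < 0} ∩
      {x : P × P × P | cr (p - x.1) (x.2.2 - x.1) < 0}))

lemma mem_E3 {N : Finset P} {x : P × P × P} :
    x ∈ E3 N ↔ (x.1 ∈ Q ∧ x.2.1 ∈ Q ∧ x.2.2 ∈ Q) ∧ ∀ p ∈ N,
      (0 < cr (p - x.1) (x.2.1 - x.1) ∧ 0 < cr (p - x.1) (x.2.2 - x.1)) ∨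
      (cr (p - x.1) (x.2.1 - x.1) < 0 ∧ cr (p - x.1) (x.2.2 - x.1) < 0) := by
  simp [E3, Set.mem_iInter, Set.mem_prod, and_assoc]

lemma measurable_cr1 (p : P) : Measurable fun x : P × P × P => cr (p - x.1) (x.2.1 - x.1) := by
  unfold cr; fun_prop

lemma measurable_cr2 (p : P) : Measurable fun x : P × P × P => cr (p - x.1) (x.2.2 - x.1) := by
  unfold cr; fun_prop

lemma measurable_E3 (N : Finset P) : MeasurableSet (E3 N) := by
  apply (measurableQ.prod (measurableQ.prod measurableQ)).inter
  apply MeasurableSet.biInter (N.countable_toSet)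
  intro p _
  exact ((measurableSet_lt measurable_const (measurable_cr1 p)).inter
    (measurableSet_lt measurable_const (measurable_cr2 p))).union
    ((measurableSet_lt (measurable_cr1 p) measurable_const).inter
    (measurableSet_lt (measurable_cr2 p) measurable_const))

lemma mp_e : MeasurePreserving (fun A : Fin 3 → P => (A 0, A 1, A 2))
    (volume : Measure (Fin 3 → P)) (volume : Measure (P × P × P)) := by
  have h1 := measurePreserving_piFinSuccAbove (fun _ : Fin 3 => (volume : Measure P)) 0
  have h2 := measurePreserving_piFinTwo (fun _ : Fin 2 => (volume : Measure P))
  have h3 := (MeasurePreserving.id (volume : Measure P)).prod h2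
  have h4 := h3.comp h1
  have hfun : (Prod.map (id : P → P) (MeasurableEquiv.piFinTwo (fun _ : Fin 2 => P)) ∘
      (MeasurableEquiv.piFinSuccAbove (fun _ : Fin 3 => P) 0)) =
      fun A : Fin 3 → P => (A 0, A 1, A 2) := by
    funext A
    simp only [Function.comp_apply, MeasurableEquiv.piFinSuccAbove_apply,
      MeasurableEquiv.piFinTwo_apply, Prod.map_apply, id_eq,
      Fin.insertNthEquiv, Equiv.coe_fn_symm_mk, Fin.removeNth]
    refine Prod.ext rfl (Prod.ext ?_ ?_) <;> simp [Fin.removeNth, Fin.succAbove]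
  rw [hfun] at h4
  exact h4

theorem main (n : ℕ) (hn : 0 < n) (N : Finset (ℝ × ℝ))
    (hcard : N.card = n)
    (hN : ↑N ⊆ Set.Ioo (0:ℝ) 1 ×ˢ Set.Ioo (0:ℝ) 1) :
    (1 : ℝ≥0∞) / (2 * n) ≤ volume {A : Fin 3 → ℝ × ℝ |
      (∀ i, A i ∈ (Set.Ioo (0:ℝ) 1 ×ˢ Set.Ioo (0:ℝ) 1) \ ↑N) ∧
      convexHull ℝ (Set.range A) ⊆ (Set.Ioo (0:ℝ) 1 ×ˢ Set.Ioo (0:ℝ) 1) \ ↑N} := by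
  classical
  have hQeq : (Set.Ioo (0:ℝ) 1 ×ˢ Set.Ioo (0:ℝ) 1) = Q := rfl
  have hNnull : volume (↑N : Set P) = 0 := (N.finite_toSet).measure_zero volume
  have hQN : volume (Q \ ↑N) = 1 := by rw [measure_diff_null hNnull]; exact volQ
  have key : (1:ℝ≥0∞)/(2*n) ≤ volume (E3 N) := by
    rw [Measure.volume_eq_prod, Measure.prod_apply (measurable_E3 N)]
    have hpoint : ∀ z : P, (Q \ ↑N).indicator (fun _ => (1:ℝ≥0∞)/(2*n)) z ≤
        volume (Prod.mk z ⁻¹' E3 N) := by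
      intro z
      by_cases hz : z ∈ Q \ ↑N
      · rw [Set.indicator_of_mem hz]
        have hzne : ∀ p ∈ N, p ≠ z := by
          intro p hp hpz
          exact hz.2 (by rw [← hpz]; exact_mod_cast hp)
        have hset : Prod.mk z ⁻¹' E3 N = {y : P × P | y.1 ∈ Q ∧ y.2 ∈ Q ∧ ∀ p ∈ N,
            (0 < cr (p - z) (y.1 - z) ∧ 0 < cr (p - z) (y.2 - z)) ∨
            (cr (p - z) (y.1 - z) < 0 ∧ cr (p - z) (y.2 - z) < 0)} := by
          ext y
          rw [Set.mem_preimage, mem_E3]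
          simp [hz.1, and_assoc]
        rw [hset]
        exact slice_lb N n hn hcard z hzne
      · rw [Set.indicator_of_notMem hz]
        exact zero_le
    calc (1:ℝ≥0∞)/(2*n)
        = ∫⁻ z, (Q \ ↑N).indicator (fun _ => (1:ℝ≥0∞)/(2*n)) z := by
          rw [lintegral_indicator_const (measurableQ.diff (N.finite_toSet.measurableSet)),
            hQN, mul_one]
    _ ≤ ∫⁻ z, volume (Prod.mk z ⁻¹' E3 N) := lintegral_mono hpoint
  have hpre : volume ((fun A : Fin 3 → P => (A 0, A 1, A 2)) ⁻¹' E3 N) = volume (E3 N) :=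
    mp_e.measure_preimage (measurable_E3 N).nullMeasurableSet
  refine le_trans key ?_
  rw [← hpre]
  apply measure_mono
  intro A hA
  rw [Set.mem_preimage, mem_E3] at hA
  obtain ⟨⟨h0, h1, h2⟩, hp⟩ := hA
  have havoid := hull_avoid N A hp
  have hhull : convexHull ℝ (Set.range A) ⊆ Q := by
    apply convexHull_min ?_ ((convex_Ioo (0:ℝ) 1).prod (convex_Ioo (0:ℝ) 1))
    rintro _ ⟨i, rfl⟩
    fin_cases i <;> assumption
  rw [Set.mem_setOf_eq, hQeq]
  constructor
  · intro i
    fin_cases i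
    · refine ⟨h0, fun hmem => ?_⟩
      rcases hp (A 0) (by exact_mod_cast hmem) with ⟨ha, _⟩ | ⟨ha, _⟩ <;>
      · rw [sub_self, cr_zero_left] at ha
        exact lt_irrefl 0 ha
    · refine ⟨h1, fun hmem => ?_⟩
      rcases hp (A 1) (by exact_mod_cast hmem) with ⟨ha, _⟩ | ⟨ha, _⟩ <;>
      · rw [cr_self] at ha
        exact lt_irrefl 0 ha
    · refine ⟨h2, fun hmem => ?_⟩
      rcases hp (A 2) (by exact_mod_cast hmem) with ⟨_, ha⟩ | ⟨_, ha⟩ <;>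
      · rw [cr_self] at ha
        exact lt_irrefl 0 ha
  · intro q hq
    exact ⟨hhull hq, fun hqN => havoid q (by exact_mod_cast hqN) hq⟩

end UnitSq

/-- Removing `n` points from the open unit square leaves a set `S` with
`b₂(S) ≥ 1/(2n)` (here `λ(S) = 1`, so `b₂(S)` is just the measure of the 2-simplex set). -/
theorem unit_square_minus_points (n : ℕ) (hn : 0 < n) (N : Finset (ℝ × ℝ))
    (hcard : N.card = n)
    (hN : ↑N ⊆ Set.Ioo (0:ℝ) 1 ×ˢ Set.Ioo (0:ℝ) 1) :
    (1 : ℝ≥0∞) / (2 * n) ≤ volume {A : Fin 3 → ℝ × ℝ |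
      (∀ i, A i ∈ (Set.Ioo (0:ℝ) 1 ×ˢ Set.Ioo (0:ℝ) 1) \ ↑N) ∧
      convexHull ℝ (Set.range A) ⊆ (Set.Ioo (0:ℝ) 1 ×ˢ Set.Ioo (0:ℝ) 1) \ ↑N} :=
  UnitSq.main n hn N hcard hN
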